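/- Let P be a D-valued partial lattice with (Id∧). Then the pointwise meet of any two affine lower functions on P is again an affine lower function on P. In particular, the set of affine ideal functions on P is closed under pointwise meet. -/

import Mathlib

open Finset

/-- The Boolean value `⟦x = y⟧ = ⟦x ≤ y⟧ ⊓ ⟦y ≤ x⟧` in a `D`-valued poset. -/
def eqv {D P : Type*} [DistribLattice D] (le : P → P → D) (x y : P) : D :=
  le x y ⊓ le y x

/-- The Boolean value `⟦x ∈ Z⟧ = ⋁_{z ∈ Z} ⟦x = z⟧` for a nonempty finite `Z`. -/
def memv {D P : Type*} [DistribLattice D] (le : P → P → D) (x : P)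
    (Z : Finset P) (hZ : Z.Nonempty) : D :=
  Z.sup' hZ (eqv le x)

/-- The Boolean value `⟦X ⊆ Y⟧ = ⋀_{x ∈ X} ⟦x ∈ Y⟧`. -/
def subv {D P : Type*} [DistribLattice D] (le : P → P → D)
    (X : Finset P) (hX : X.Nonempty) (Y : Finset P) (hY : Y.Nonempty) : D :=
  X.inf' hX fun x => memv le x Y hY

/-- The Boolean value `⟦X = Y⟧ = ⟦X ⊆ Y⟧ ⊓ ⟦Y ⊆ X⟧`. -/
def setEqv {D P : Type*} [DistribLattice D] (le : P → P → D)
    (X : Finset P) (hX : X.Nonempty) (Y : Finset P) (hY : Y.Nonempty) : D :=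
  subv le X hX Y hY ⊓ subv le Y hY X hX

/-- A `D`-valued poset: a set `P` with Boolean values `⟦a ≤ b⟧ ∈ D` satisfying
reflexivity and transitivity. -/
structure DValuedPoset (D P : Type*) [DistribLattice D] [OrderTop D] where
  le : P → P → D
  le_refl : ∀ a, le a a = ⊤
  le_trans : ∀ a b c, le a b ⊓ le b c ≤ le a c

/-- A `D`-valued partial lattice: a `D`-valued poset with Boolean values
`⟦a = ⋁X⟧` and `⟦a = ⋀X⟧` satisfying conditions (1), (1*), (2), (2*), (3), (3*). -/
structure DValuedPartialLattice (D P : Type*) [DistribLattice D] [OrderTop D]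
    extends DValuedPoset D P where
  jn : P → Finset P → D
  mt : P → Finset P → D
  jn_le : ∀ a b (X : Finset P) (hX : X.Nonempty),
    jn a X ⊓ le a b = jn a X ⊓ X.inf' hX fun x => le x b
  mt_le : ∀ a b (X : Finset P) (hX : X.Nonempty),
    mt a X ⊓ le b a = mt a X ⊓ X.inf' hX fun x => le b x
  jn_congr : ∀ a (X Y : Finset P) (hX : X.Nonempty) (hY : Y.Nonempty),
    jn a X ⊓ setEqv le X hX Y hY ≤ jn a Y
  mt_congr : ∀ a (X Y : Finset P) (hX : X.Nonempty) (hY : Y.Nonempty),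
    mt a X ⊓ setEqv le X hX Y hY ≤ mt a Y
  jn_eq : ∀ a b (X : Finset P), jn a X ⊓ eqv le a b ≤ jn b X
  mt_eq : ∀ a b (X : Finset P), mt a X ⊓ eqv le a b ≤ mt b X

variable {D P : Type*} [DistribLattice D] [OrderTop D]

/-- An affine lower function: a map of the form `x ↦ ⋁_{i<n}(⟦x≤u_i⟧ ⊓ α_i)` with `n ≥ 1`. -/
def IsAffineLowerFct (V : DValuedPartialLattice D P) (f : P → D) : Prop :=
  ∃ (n : ℕ) (hn : 0 < n) (u : Fin n → P) (α : Fin n → D), ∀ x,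
    f x = (Finset.univ : Finset (Fin n)).sup' ⟨⟨0, hn⟩, Finset.mem_univ _⟩
      fun i => V.le x (u i) ⊓ α i

/-- A lower function: `f(y) ⊓ ⟦x≤y⟧ ≤ f(x)`. -/
def IsLowerFct (V : DValuedPartialLattice D P) (f : P → D) : Prop :=
  ∀ x y, f y ⊓ V.le x y ≤ f x

/-- An ideal function: a lower function with `⟦a=⋁X⟧ ⊓ ⋀_{x∈X}f(x) ≤ f(a)`. -/
def IsIdealFct (V : DValuedPartialLattice D P) (f : P → D) : Prop :=
  IsLowerFct V f ∧
    ∀ (a : P) (X : Finset P) (hX : X.Nonempty), V.jn a X ⊓ X.inf' hX f ≤ f a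

/-- `P` has (Id∧): every pair of elements of `P` has an (Id∧)-sample. -/
def HasIdMeet (V : DValuedPartialLattice D P) : Prop :=
  ∀ a b : P, ∃ (U : Finset P) (hU : U.Nonempty), ∀ x,
    V.le x a ⊓ V.le x b =
      U.sup' hU fun w => V.le x w ⊓ (V.le w a ⊓ V.le w b)


/-- Auxiliary characterization of affine lower functions via a nonempty finite set of
pairs `(u, α)`. -/
lemma isAffineLowerFct_iff (V : DValuedPartialLattice D P) (f : P → D) :
    IsAffineLowerFct V f ↔ ∃ (S : Finset (P × D)) (hS : S.Nonempty),
      ∀ x, f x = S.sup' hS fun p => V.le x p.1 ⊓ p.2 := by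
  classical
  constructor
  · rintro ⟨n, hn, u, α, hf⟩
    refine ⟨(Finset.univ : Finset (Fin n)).image (fun i => (u i, α i)),
      ⟨(u ⟨0, hn⟩, α ⟨0, hn⟩), Finset.mem_image_of_mem _ (Finset.mem_univ _)⟩, fun x => ?_⟩
    rw [hf x]
    exact (Finset.sup'_image (s := (Finset.univ : Finset (Fin n))) (f := fun i => (u i, α i)) _
      (fun p : P × D => V.le x p.1 ⊓ p.2)).symm
  · rintro ⟨S, hS, hf⟩
    refine ⟨S.card, hS.card_pos, fun i => (S.equivFin.symm i : P × D).1,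
      fun i => (S.equivFin.symm i : P × D).2, fun x => ?_⟩
    rw [hf x]
    apply le_antisymm
    · refine Finset.sup'_le _ _ fun p hp => ?_
      have := Finset.le_sup'
        (f := fun i : Fin S.card =>
          V.le x (S.equivFin.symm i : P × D).1 ⊓ (S.equivFin.symm i : P × D).2)
        (Finset.mem_univ (S.equivFin ⟨p, hp⟩))
      simpa using this
    · refine Finset.sup'_le _ _ fun i _ => ?_
      exact Finset.le_sup' (fun p : P × D => V.le x p.1 ⊓ p.2) (S.equivFin.symm i).2

lemma affine_inf_aux (V : DValuedPartialLattice D P) (hIdM : HasIdMeet V)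
    (f g : P → D) (hf : IsAffineLowerFct V f) (hg : IsAffineLowerFct V g) :
    IsAffineLowerFct V fun x => f x ⊓ g x := by
  classical
  rw [isAffineLowerFct_iff] at hf hg ⊢
  obtain ⟨S, hS, hfS⟩ := hf
  obtain ⟨T, hT, hgT⟩ := hg
  choose W hW hWspec using hIdM
  set t : P × D → P × D → Finset (P × D) := fun p q =>
    (W p.1 q.1).image (fun w => (w, (V.le w p.1 ⊓ V.le w q.1) ⊓ (p.2 ⊓ q.2))) with ht
  have htne : ∀ pq : (P × D) × (P × D), (t pq.1 pq.2).Nonempty :=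
    fun pq => (hW pq.1.1 pq.2.1).image _
  refine ⟨(S ×ˢ T).biUnion (fun pq => t pq.1 pq.2),
    (hS.product hT).biUnion fun b _ => htne b, fun x => ?_⟩
  have step1 : f x ⊓ g x = (S ×ˢ T).sup' (hS.product hT)
      fun pq => (V.le x pq.1.1 ⊓ V.le x pq.2.1) ⊓ (pq.1.2 ⊓ pq.2.2) := by
    rw [hfS x, hgT x, Finset.sup'_inf_sup']
    refine Finset.sup'_congr _ rfl fun pq _ => ?_
    ac_rfl
  have step2 : ((S ×ˢ T).biUnion (fun pq => t pq.1 pq.2)).sup'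
      ((hS.product hT).biUnion fun b _ => htne b) (fun p => V.le x p.1 ⊓ p.2) =
      (S ×ˢ T).sup' (hS.product hT)
        (fun pq => (t pq.1 pq.2).sup' (htne pq) (fun p => V.le x p.1 ⊓ p.2)) :=
    Finset.sup'_biUnion (fun p : P × D => V.le x p.1 ⊓ p.2) (hS.product hT) htne
  rw [step1, step2]
  refine Finset.sup'_congr _ rfl fun pq _ => ?_
  simp only [ht]
  rw [Finset.sup'_image]
  rw [hWspec pq.1.1 pq.2.1 x, Finset.sup'_inf_distrib_right]
  refine Finset.sup'_congr _ rfl fun w _ => ?_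
  simp only [Function.comp]
  ac_rfl

/-- if the `D`-valued partial lattice `P` has (Id∧), then the pointwise meet
of two affine lower functions is again an affine lower function; in particular the affine
ideal functions on `P` are closed under pointwise meet. -/
theorem affineLower_inf_closed [Nonempty P]
    (V : DValuedPartialLattice D P) (hIdM : HasIdMeet V) :
    (∀ f g : P → D, IsAffineLowerFct V f → IsAffineLowerFct V g →
      IsAffineLowerFct V fun x => f x ⊓ g x) ∧
    (∀ f g : P → D,
      IsAffineLowerFct V f ∧ IsIdealFct V f →
      IsAffineLowerFct V g ∧ IsIdealFct V g →
      IsAffineLowerFct V (fun x => f x ⊓ g x) ∧ IsIdealFct V fun x => f x ⊓ g x) := by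
  refine ⟨fun f g hf hg => affine_inf_aux V hIdM f g hf hg, ?_⟩
  rintro f g ⟨hfa, hfl, hfi⟩ ⟨hga, hgl, hgi⟩
  refine ⟨affine_inf_aux V hIdM f g hfa hga, ?_, ?_⟩
  · intro x y
    exact le_inf
      (le_trans (inf_le_inf_right _ inf_le_left) (hfl x y))
      (le_trans (inf_le_inf_right _ inf_le_right) (hgl x y))
  · intro a X hX
    refine le_inf ?_ ?_
    · refine le_trans (inf_le_inf_left _ ?_) (hfi a X hX)
      exact Finset.le_inf' hX _ fun x hx => le_trans (Finset.inf'_le _ hx) inf_le_left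
    · refine le_trans (inf_le_inf_left _ ?_) (hgi a X hX)
      exact Finset.le_inf' hX _ fun x hx => le_trans (Finset.inf'_le _ hx) inf_le_right
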